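/- Let p be a prime and let G be a finite abelian group of order 3p + 1. If G is not cyclic, then G has no nontrivial near-factorization. -/

import Mathlib

open Finset
open scoped Pointwise

/-- A pair `(A, B)` of subsets of a finite group `G` is a near-factorization of `G`
if `|A| * |B| = |G| - 1` and `A * B = G \ {e}`.  It is nontrivial if `|A| > 1` and `|B| > 1`. -/
def IsNontrivialNearFactorization {G : Type*} [Group G] [Fintype G] [DecidableEq G]
    (A B : Finset G) : Prop :=
  A.card * B.card = Fintype.card G - 1 ∧ A * B = Finset.univ \ {1} ∧
    1 < A.card ∧ 1 < B.card

section NF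

variable {G : Type*} [CommGroup G] [Fintype G] [DecidableEq G]

lemma nf_card_compl : ((Finset.univ : Finset G) \ {1}).card = Fintype.card G - 1 := by
  rw [Finset.card_sdiff_of_subset (by simp)]
  simp

lemma nf_injOn {A B : Finset G} (hc : A.card * B.card = Fintype.card G - 1)
    (hAB : A * B = Finset.univ \ {1}) :
    Set.InjOn (fun p : G × G => p.1 * p.2) (A ×ˢ B) := by
  have h1 : ((A ×ˢ B).image (fun p : G × G => p.1 * p.2)).card = (A ×ˢ B).card := by
    rw [← Finset.mul_def, hAB, nf_card_compl, Finset.card_product, hc]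
  rw [← Finset.coe_product]
  exact Finset.card_image_iff.mp h1

/-- The coset-counting contradiction: if `A` (of size 3) lies in a single coset of a
proper subgroup `H`, we get `3 ∣ |H|` and `3 ∣ |H| - 1`. -/
lemma nf_coset_count {A B : Finset G} (hc : A.card * B.card = Fintype.card G - 1)
    (hAB : A * B = Finset.univ \ {1}) (h3 : A.card = 3)
    (H : Subgroup G) (hne : H ≠ ⊤) (t : G) (hsub : ∀ a ∈ A, t⁻¹ * a ∈ H) : False := by
  classical
  have hinj := nf_injOn hc hAB
  set Cg : G → Finset G := fun g => Finset.univ.filter (fun x => g⁻¹ * x ∈ H) with hCg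
  -- first evaluation : pair count = (Cg g \ {1}).card
  have heval1 : ∀ g : G,
      ((A ×ˢ B).filter (fun p : G × G => g⁻¹ * (p.1 * p.2) ∈ H)).card
        = ((Cg g) \ {1}).card := by
    intro g
    have himg : ((A ×ˢ B).filter (fun p : G × G => g⁻¹ * (p.1 * p.2) ∈ H)).image
        (fun p : G × G => p.1 * p.2) = (Cg g) \ {1} := by
      ext x
      simp only [Finset.mem_image, Finset.mem_filter, Finset.mem_sdiff, hCg,
        Finset.mem_singleton, Finset.mem_univ, true_and]
      constructor
      · rintro ⟨p, ⟨hp, hpH⟩, rfl⟩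
        refine ⟨hpH, ?_⟩
        have : p.1 * p.2 ∈ A * B := by
          rw [Finset.mul_def]
          exact Finset.mem_image.mpr ⟨p, hp, rfl⟩
        rw [hAB] at this
        simpa using (Finset.mem_sdiff.mp this).2
      · rintro ⟨hxH, hx1⟩
        have hx : x ∈ A * B := by
          rw [hAB]; simp [hx1]
        rw [Finset.mul_def, Finset.mem_image] at hx
        obtain ⟨p, hp, hpx⟩ := hx
        exact ⟨p, ⟨hp, by rw [hpx]; exact hxH⟩, hpx⟩
    have hsubset : ((A ×ˢ B).filter (fun p : G × G => g⁻¹ * (p.1 * p.2) ∈ H)) ⊆ A ×ˢ B :=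
      Finset.filter_subset _ _
    have hcard := Finset.card_image_of_injOn
      (f := fun p : G × G => p.1 * p.2)
      (s := (A ×ˢ B).filter (fun p : G × G => g⁻¹ * (p.1 * p.2) ∈ H))
      (hinj.mono (by exact_mod_cast Finset.coe_subset.mpr hsubset))
    rw [himg] at hcard
    exact hcard.symm
  -- second evaluation
  have heval2 : ∀ g : G,
      ((A ×ˢ B).filter (fun p : G × G => g⁻¹ * (p.1 * p.2) ∈ H)).card
        = 3 * (B.filter (fun b => g⁻¹ * (t * b) ∈ H)).card := by
    intro g
    have hstep : ((A ×ˢ B).filter (fun p : G × G => g⁻¹ * (p.1 * p.2) ∈ H)).card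
        = ∑ a ∈ A, (B.filter (fun b => g⁻¹ * (a * b) ∈ H)).card := by
      rw [Finset.card_filter, Finset.sum_product]
      exact Finset.sum_congr rfl (fun a _ => (Finset.card_filter _ _).symm)
    rw [hstep]
    have hconst : ∀ a ∈ A, (B.filter (fun b => g⁻¹ * (a * b) ∈ H)).card
        = (B.filter (fun b => g⁻¹ * (t * b) ∈ H)).card := by
      intro a ha
      congr 1
      ext b
      simp only [Finset.mem_filter, and_congr_right_iff]
      intro _
      have hrw : g⁻¹ * (a * b) = (g⁻¹ * (t * b)) * (t⁻¹ * a) := by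
        have h1 : (g⁻¹ * (t * b)) * (t⁻¹ * a) = g⁻¹ * ((t * b) * (t⁻¹ * a)) :=
          mul_assoc _ _ _
        have h2 : (t * b) * (t⁻¹ * a) = (t * t⁻¹) * (b * a) := mul_mul_mul_comm t b t⁻¹ a
        rw [h1, h2, mul_inv_cancel, one_mul, mul_comm b a]
      rw [hrw]
      exact H.mul_mem_cancel_right (hsub a ha)
    rw [Finset.sum_congr rfl hconst, Finset.sum_const, h3, smul_eq_mul]
  have hcardC : ∀ g : G, (Cg g).card = (Cg 1).card := by
    intro g
    have : Cg g = (Cg 1).image (fun x => g * x) := by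
      ext x
      simp only [hCg, Finset.mem_filter, Finset.mem_univ, true_and, Finset.mem_image,
        inv_one, one_mul]
      constructor
      · intro hx
        exact ⟨g⁻¹ * x, hx, by group⟩
      · rintro ⟨y, hy, rfl⟩
        simpa using hy
    rw [this, Finset.card_image_of_injective _ (mul_right_injective g)]
  have h1C1 : (1 : G) ∈ Cg 1 := by
    simp only [hCg, Finset.mem_filter, Finset.mem_univ, true_and, inv_one, one_mul]
    exact H.one_mem
  obtain ⟨g₀, hg₀⟩ : ∃ g₀ : G, g₀ ∉ H := by
    by_contra h
    push_neg at h
    exact hne (Subgroup.eq_top_iff' H |>.mpr h)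
  have h1C2 : (1 : G) ∉ Cg g₀ := by
    simp only [hCg, Finset.mem_filter, Finset.mem_univ, true_and, mul_one]
    intro hmem
    exact hg₀ (by simpa using H.inv_mem hmem)
  have e1 : (Cg 1).card - 1 = 3 * (B.filter (fun b => (1:G)⁻¹ * (t * b) ∈ H)).card := by
    rw [← heval2 1, heval1 1, Finset.card_sdiff_of_subset (by simpa using h1C1), Finset.card_singleton]
  have e2 : (Cg 1).card = 3 * (B.filter (fun b => g₀⁻¹ * (t * b) ∈ H)).card := by
    rw [← hcardC g₀, ← heval2 g₀, heval1 g₀]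
    congr 1
    rw [Finset.sdiff_singleton_eq_erase, Finset.erase_eq_of_notMem h1C2]
  have hpos : 1 ≤ (Cg 1).card := Finset.card_pos.mpr ⟨1, h1C1⟩
  omega

end NF

section NFAlg

set_option linter.unusedSectionVars false

variable {G : Type*} [CommGroup G] [Fintype G] [DecidableEq G]

/-- The indicator element of a finset in the integral group algebra. -/
noncomputable def nfInd (S : Finset G) : MonoidAlgebra ℤ G :=
  ∑ a ∈ S, MonoidAlgebra.single a 1

lemma nfInd_apply (S : Finset G) (g : G) : (nfInd S).coeff g = if g ∈ S then 1 else 0 := by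
  classical
  rw [nfInd, MonoidAlgebra.coeff_sum, Finset.sum_apply']
  rw [Finset.sum_congr rfl (fun a _ => MonoidAlgebra.coeff_single_apply)]
  simp [Finset.sum_ite_eq]

lemma nfInd_inj {S T : Finset G} (h : nfInd S = nfInd T) : S = T := by
  ext g
  have := congrArg (fun f : MonoidAlgebra ℤ G => f.coeff g) h
  simp only [nfInd_apply] at this
  by_cases hS : g ∈ S <;> by_cases hT : g ∈ T <;> simp_all

lemma nfInd_mul {A B : Finset G} (hinj : Set.InjOn (fun p : G × G => p.1 * p.2) (A ×ˢ B)) :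
    nfInd A * nfInd B = nfInd (A * B) := by
  classical
  rw [nfInd, nfInd, Finset.sum_mul_sum]
  have : ∀ a ∈ A, ∀ b ∈ B, MonoidAlgebra.single a (1:ℤ) * MonoidAlgebra.single b 1
      = MonoidAlgebra.single (a * b) 1 := by
    intro a _ b _
    rw [MonoidAlgebra.single_mul_single, one_mul]
  rw [Finset.sum_congr rfl (fun a ha => Finset.sum_congr rfl (fun b hb => this a ha b hb))]
  rw [nfInd, Finset.mul_def]
  rw [Finset.sum_image (fun x hx y hy hxy => hinj (by simpa using hx) (by simpa using hy) hxy)]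
  rw [Finset.sum_product]

lemma nfInd_sdiff_one :
    nfInd ((Finset.univ : Finset G) \ {1}) = nfInd Finset.univ - MonoidAlgebra.single 1 1 := by
  classical
  have h := Finset.sum_sdiff (f := fun a : G => MonoidAlgebra.single a (1:ℤ))
    (Finset.subset_univ {1})
  rw [Finset.sum_singleton] at h
  rw [nfInd, nfInd, ← h]
  ring

lemma nfInd_mul_univ (f : MonoidAlgebra ℤ G) :
    f * nfInd Finset.univ = (∑ g : G, f.coeff g) • nfInd Finset.univ := by
  classical
  have hsingle : ∀ (a : G) (r : ℤ),
      MonoidAlgebra.single a r * nfInd Finset.univ = r • nfInd Finset.univ := by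
    intro a r
    rw [nfInd, Finset.mul_sum]
    have : ∀ g : G, MonoidAlgebra.single a r * MonoidAlgebra.single g 1
        = MonoidAlgebra.single (a * g) r := by
      intro g; rw [MonoidAlgebra.single_mul_single, mul_one]
    rw [Finset.sum_congr rfl (fun g _ => this g)]
    rw [Finset.smul_sum]
    rw [Fintype.sum_equiv (Equiv.mulLeft a) (fun g => MonoidAlgebra.single (a * g) r)
      (fun g => MonoidAlgebra.single g r) (fun g => rfl)]
    apply Finset.sum_congr rfl
    intro g _
    rw [MonoidAlgebra.smul_single]
    norm_num
  -- decompose f as a sum of singles over univ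
  have hf : f = ∑ g : G, MonoidAlgebra.single g (f.coeff g) := by
    apply MonoidAlgebra.coeff_injective
    ext h
    rw [MonoidAlgebra.coeff_sum, Finset.sum_apply']
    rw [Finset.sum_congr rfl (fun a _ => MonoidAlgebra.coeff_single_apply)]
    simp [Finset.sum_ite_eq]
  conv_lhs => rw [hf]
  rw [Finset.sum_mul]
  rw [Finset.sum_congr rfl (fun g _ => hsingle g (f.coeff g))]
  rw [← Finset.sum_smul]

lemma nf_sum_ind (S : Finset G) : (∑ g : G, (nfInd S).coeff g) = (S.card : ℤ) := by
  classical
  rw [Finset.sum_congr rfl (fun g _ => nfInd_apply S g)]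
  rw [Finset.sum_ite_mem]
  simp

/-- Partner uniqueness in a near-factorization. -/
lemma nf_partner_unique {A₁ A₂ B : Finset G}
    (h1 : A₁.card * B.card = Fintype.card G - 1)
    (h2 : A₂.card * B.card = Fintype.card G - 1)
    (e1 : A₁ * B = Finset.univ \ {1}) (e2 : A₂ * B = Finset.univ \ {1})
    (hcards : A₁.card = A₂.card) : A₁ = A₂ := by
  classical
  have hinj1 := nf_injOn h1 e1
  have hinj2 := nf_injOn h2 e2
  set x : MonoidAlgebra ℤ G := nfInd A₁ - nfInd A₂ with hx
  have hxB : x * nfInd B = 0 := by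
    rw [hx, sub_mul, nfInd_mul hinj1, nfInd_mul hinj2, e1, e2, sub_self]
  have key : x * (nfInd B * nfInd A₁) = 0 := by
    rw [← mul_assoc, hxB, zero_mul]
  have hBA : nfInd B * nfInd A₁ = nfInd Finset.univ - MonoidAlgebra.single 1 1 := by
    rw [mul_comm, nfInd_mul hinj1, e1, nfInd_sdiff_one]
  rw [hBA, mul_sub, nfInd_mul_univ] at key
  have hx1 : x * MonoidAlgebra.single 1 1 = x := by
    have : MonoidAlgebra.single (1:G) (1:ℤ) = (1 : MonoidAlgebra ℤ G) := rfl
    rw [this, mul_one]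
  rw [hx1] at key
  have hsum : (∑ g : G, x.coeff g) = 0 := by
    have : ∀ g : G, x.coeff g = (nfInd A₁).coeff g - (nfInd A₂).coeff g := by intro g; rw [hx]; rfl
    rw [Finset.sum_congr rfl (fun g _ => this g), Finset.sum_sub_distrib,
      nf_sum_ind, nf_sum_ind, hcards, sub_self]
  rw [hsum, zero_smul, zero_sub, neg_eq_zero] at key
  rw [hx] at key
  exact nfInd_inj (sub_eq_zero.mp key)

end NFAlg

section NFMain

set_option linter.unusedSectionVars false

variable {G : Type*} [CommGroup G] [Fintype G] [DecidableEq G]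

/-- There is a single element `c` missed by `A * B⁻¹`. -/
lemma nf_exists_missing {A B : Finset G} (hc : A.card * B.card = Fintype.card G - 1)
    (hAB : A * B = Finset.univ \ {1}) :
    ∃ c : G, A * B⁻¹ = Finset.univ \ {c} := by
  classical
  have hinj := nf_injOn hc hAB
  set W : G → ℕ := fun g => ((A ×ˢ B).filter (fun p : G × G => p.1 * p.2⁻¹ = g)).card with hW
  have key2 : ∀ p ∈ A ×ˢ B, ∀ q ∈ A ×ˢ B,
      (p : G × G).1 * p.2⁻¹ = (q : G × G).1 * q.2⁻¹ → p = q := by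
    intro p hp q hq h
    have hpq : p.1 * q.2 = q.1 * p.2 := by
      have h2 : p.1 * p.2⁻¹ * (p.2 * q.2) = q.1 * q.2⁻¹ * (p.2 * q.2) := by rw [h]
      have l : p.1 * p.2⁻¹ * (p.2 * q.2) = p.1 * q.2 := by
        rw [mul_assoc]
        congr 1
        rw [← mul_assoc, inv_mul_cancel, one_mul]
      have r : q.1 * q.2⁻¹ * (p.2 * q.2) = q.1 * p.2 := by
        rw [mul_comm p.2 q.2, mul_assoc]
        congr 1
        rw [← mul_assoc, inv_mul_cancel, one_mul]
      rw [l, r] at h2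
      exact h2
    have hp' := Finset.mem_product.mp hp
    have hq' := Finset.mem_product.mp hq
    have hmem1 : ((p.1, q.2) : G × G) ∈ ((↑A : Set G) ×ˢ (↑B : Set G)) :=
      ⟨Finset.mem_coe.mpr hp'.1, Finset.mem_coe.mpr hq'.2⟩
    have hmem2 : ((q.1, p.2) : G × G) ∈ ((↑A : Set G) ×ˢ (↑B : Set G)) :=
      ⟨Finset.mem_coe.mpr hq'.1, Finset.mem_coe.mpr hp'.2⟩
    have : ((p.1, q.2) : G × G) = (q.1, p.2) :=
      hinj hmem1 hmem2
        (show ((p.1, q.2) : G × G).1 * ((p.1, q.2) : G × G).2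
            = ((q.1, p.2) : G × G).1 * ((q.1, p.2) : G × G).2 from hpq)
    have e1 : p.1 = q.1 := (Prod.ext_iff.mp this).1
    have e2 : q.2 = p.2 := (Prod.ext_iff.mp this).2
    exact Prod.ext e1 e2.symm
  have hWle : ∀ g : G, W g ≤ 1 := by
    intro g
    rw [hW]
    apply Finset.card_le_one.mpr
    intro p hp q hq
    have hp' := Finset.mem_filter.mp hp
    have hq' := Finset.mem_filter.mp hq
    exact key2 p hp'.1 q hq'.1 (hp'.2.trans hq'.2.symm)
  have hWsum : (∑ g : G, W g) = Fintype.card G - 1 := by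
    have := Finset.card_eq_sum_card_fiberwise
      (f := fun p : G × G => p.1 * p.2⁻¹) (s := A ×ˢ B) (t := Finset.univ)
      (fun p _ => Finset.mem_univ _)
    rw [Finset.card_product, hc] at this
    exact this.symm
  -- the zero set has exactly one element
  have hsplit := Finset.card_filter_add_card_filter_not
    (s := (Finset.univ : Finset G)) (p := fun g => W g = 0)
  have hsum2 : (∑ g : G, W g) = (Finset.univ.filter (fun g => ¬ W g = 0)).card := by
    rw [← Finset.sum_filter_add_sum_filter_not Finset.univ (fun g => W g = 0)]
    rw [Finset.sum_congr rfl (fun g hg => (Finset.mem_filter.mp hg).2)]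
    rw [Finset.sum_const, smul_eq_mul, mul_zero, zero_add]
    rw [Finset.card_eq_sum_ones]
    apply Finset.sum_congr rfl
    intro g hg
    have := (Finset.mem_filter.mp hg).2
    have := hWle g
    omega
  have hzcard : (Finset.univ.filter (fun g => W g = 0)).card = 1 := by
    have hcardpos : 1 ≤ Fintype.card G := Fintype.card_pos
    rw [Finset.card_univ] at hsplit
    omega
  obtain ⟨c, hc'⟩ := Finset.card_eq_one.mp hzcard
  refine ⟨c, ?_⟩
  ext g
  simp only [Finset.mem_sdiff, Finset.mem_univ, true_and, Finset.mem_singleton]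
  constructor
  · intro hg
    obtain ⟨y, hy, z, hz, hyz⟩ := Finset.mem_mul.mp hg
    obtain ⟨b, hb, hbz⟩ := Finset.mem_inv.mp hz
    have hWg : W g ≠ 0 := by
      rw [hW]
      apply Finset.card_ne_zero_of_mem (a := (y, b))
      rw [Finset.mem_filter, Finset.mem_product]
      exact ⟨⟨hy, hb⟩, by rw [hbz, hyz]⟩
    intro hgc
    have : g ∈ Finset.univ.filter (fun g => W g = 0) → W g = 0 :=
      fun h => (Finset.mem_filter.mp h).2
    rw [hc'] at this
    exact hWg (this (by simp [hgc]))
  · intro hgc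
    have hWg : W g ≠ 0 := by
      intro h0
      have : g ∈ Finset.univ.filter (fun g => W g = 0) := by
        rw [Finset.mem_filter]
        exact ⟨Finset.mem_univ _, h0⟩
      rw [hc', Finset.mem_singleton] at this
      exact hgc this
    rw [hW] at hWg
    obtain ⟨q, hq⟩ := Finset.card_ne_zero.mp hWg |>.exists_mem
    have hq' := Finset.mem_filter.mp hq
    have hq'' := Finset.mem_product.mp hq'.1
    exact Finset.mem_mul.mpr ⟨q.1, hq''.1, q.2⁻¹, Finset.inv_mem_inv hq''.2, hq'.2⟩

lemma nf_zpow_dichotomy {u : G} (hu : u * u = 1) (m : ℤ) : u ^ m = 1 ∨ u ^ m = u := by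
  rcases Int.even_or_odd m with ⟨k, hk⟩ | ⟨k, hk⟩
  · left
    rw [hk, zpow_add, ← mul_zpow, hu, one_zpow]
  · right
    have h2 : u ^ (2 * k) = 1 := by
      rw [zpow_mul]
      have h22 : u ^ (2:ℤ) = 1 := by
        rw [show (2:ℤ) = 1 + 1 from rfl, zpow_add, zpow_one, hu]
      rw [h22, one_zpow]
    rw [hk, zpow_add, h2, one_mul, zpow_one]

lemma nf_endgame_cyclic {A B : Finset G} (hc : A.card * B.card = Fintype.card G - 1)
    (hAB : A * B = Finset.univ \ {1}) (h3 : A.card = 3) (hnc : ¬ IsCyclic G)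
    (u t : G) (hsub : ∀ a ∈ A, t⁻¹ * a ∈ Subgroup.zpowers u) : False := by
  by_cases hH : Subgroup.zpowers u = ⊤
  · refine hnc ⟨⟨u, fun x => ?_⟩⟩
    have : x ∈ Subgroup.zpowers u := hH ▸ Subgroup.mem_top x
    obtain ⟨k, hk⟩ := Subgroup.mem_zpowers_iff.mp this
    exact ⟨k, hk⟩
  · exact nf_coset_count hc hAB h3 _ hH t hsub

lemma nf_endgame_klein {A B : Finset G} {p : ℕ} (hp : p.Prime)
    (hcardG : Fintype.card G = 3 * p + 1)
    (hc : A.card * B.card = Fintype.card G - 1)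
    (hAB : A * B = Finset.univ \ {1}) (h3 : A.card = 3)
    (u v t : G) (hu : u * u = 1) (hv : v * v = 1)
    (hsub : ∀ a ∈ A, t⁻¹ * a ∈ Subgroup.closure {u, v}) : False := by
  by_cases hH : Subgroup.closure ({u, v} : Set G) = ⊤
  · have hall : ∀ g : G, g ∈ ({1, u, v, u * v} : Finset G) := by
      intro g
      have hg : g ∈ Subgroup.closure ({u, v} : Set G) := hH ▸ Subgroup.mem_top g
      obtain ⟨m, n, hmn⟩ := Subgroup.mem_closure_pair.mp hg
      rcases nf_zpow_dichotomy hu m with h1 | h1 <;>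
        rcases nf_zpow_dichotomy hv n with h2 | h2 <;>
          simp [← hmn, h1, h2, Finset.mem_insert]
    have hle : Fintype.card G ≤ 4 := by
      have hsub4 : (Finset.univ : Finset G) ⊆ {1, u, v, u * v} := fun g _ => hall g
      have h4 : ({1, u, v, u * v} : Finset G).card ≤ 4 := by
        apply le_trans (Finset.card_insert_le _ _)
        have : ({u, v, u * v} : Finset G).card ≤ 3 := by
          apply le_trans (Finset.card_insert_le _ _)
          have : ({v, u * v} : Finset G).card ≤ 2 := by
            apply le_trans (Finset.card_insert_le _ _)
            simp
          omega
        omega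
      calc Fintype.card G = (Finset.univ : Finset G).card := (Finset.card_univ).symm
        _ ≤ ({1, u, v, u * v} : Finset G).card := Finset.card_le_card hsub4
        _ ≤ 4 := h4
    have := hp.two_le
    omega
  · exact nf_coset_count hc hAB h3 _ hH t hsub

end NFMain

section NFFinal

set_option linter.unusedSectionVars false

variable {G : Type*} [CommGroup G] [Fintype G] [DecidableEq G]

lemma nf_no_card_three {A B : Finset G} {p : ℕ} (hp : p.Prime)
    (hcardG : Fintype.card G = 3 * p + 1) (hnc : ¬ IsCyclic G)
    (hc : A.card * B.card = Fintype.card G - 1)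
    (hAB : A * B = Finset.univ \ {1}) (h3 : A.card = 3) : False := by
  classical
  obtain ⟨c, hmiss⟩ := nf_exists_missing hc hAB
  -- A⁻¹ * B = univ \ {c⁻¹}
  have hinv : A⁻¹ * B = Finset.univ \ {c⁻¹} := by
    ext g
    simp only [Finset.mem_sdiff, Finset.mem_univ, true_and, Finset.mem_singleton]
    constructor
    · rintro hg
      obtain ⟨y, hy, b, hb, hyb⟩ := Finset.mem_mul.mp hg
      obtain ⟨a, ha, hay⟩ := Finset.mem_inv.mp hy
      have hg' : g⁻¹ ∈ A * B⁻¹ := by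
        refine Finset.mem_mul.mpr ⟨a, ha, b⁻¹, Finset.inv_mem_inv hb, ?_⟩
        rw [← hyb, ← hay]
        rw [mul_inv_rev, inv_inv, mul_comm]
      rw [hmiss] at hg'
      have hne := (Finset.mem_sdiff.mp hg').2
      rw [Finset.mem_singleton] at hne
      intro hgc
      exact hne (by rw [hgc, inv_inv])
    · intro hgc
      have hg' : g⁻¹ ∈ A * B⁻¹ := by
        rw [hmiss]
        refine Finset.mem_sdiff.mpr ⟨Finset.mem_univ _, ?_⟩
        rw [Finset.mem_singleton]
        intro h
        exact hgc (by rw [← h, inv_inv])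
      obtain ⟨a, ha, z, hz, haz⟩ := Finset.mem_mul.mp hg'
      obtain ⟨b, hb, hbz⟩ := Finset.mem_inv.mp hz
      refine Finset.mem_mul.mpr ⟨a⁻¹, Finset.inv_mem_inv ha, b, hb, ?_⟩
      have habg : a * b⁻¹ = g⁻¹ := by rw [← haz, hbz]
      calc a⁻¹ * b = (a * b⁻¹)⁻¹ := by rw [mul_inv_rev, inv_inv, mul_comm]
        _ = (g⁻¹)⁻¹ := by rw [habg]
        _ = g := inv_inv g
  -- ({c} * A⁻¹) * B = univ \ {1}
  have hc2 : ({c} * A⁻¹) * B = Finset.univ \ {1} := by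
    rw [mul_assoc, hinv]
    ext g
    constructor
    · intro hg
      obtain ⟨y, hy, z, hz, hyz⟩ := Finset.mem_mul.mp hg
      rw [Finset.mem_singleton] at hy
      have hz' := (Finset.mem_sdiff.mp hz).2
      rw [Finset.mem_singleton] at hz'
      refine Finset.mem_sdiff.mpr ⟨Finset.mem_univ _, ?_⟩
      rw [Finset.mem_singleton]
      intro h1
      apply hz'
      subst hy
      rw [h1] at hyz
      exact (inv_eq_of_mul_eq_one_right hyz).symm
    · intro hg
      have h1 := (Finset.mem_sdiff.mp hg).2
      rw [Finset.mem_singleton] at h1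
      refine Finset.mem_mul.mpr
        ⟨c, Finset.mem_singleton_self c, c⁻¹ * g, ?_, by rw [mul_inv_cancel_left]⟩
      refine Finset.mem_sdiff.mpr ⟨Finset.mem_univ _, ?_⟩
      rw [Finset.mem_singleton]
      intro h
      apply h1
      have := congrArg (fun x => c * x) h
      simpa using this
  have hcardCA : ({c} * A⁻¹).card = A.card := by
    rw [Finset.card_singleton_mul, Finset.card_inv]
  have hAA : {c} * A⁻¹ = A :=
    nf_partner_unique (by rw [hcardCA]; exact hc) hc hc2 hAB (by rw [hcardCA])
  have hf : ∀ a ∈ A, c * a⁻¹ ∈ A := by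
    intro a ha
    rw [← hAA]
    exact Finset.mem_mul.mpr ⟨c, Finset.mem_singleton_self c, a⁻¹, Finset.inv_mem_inv ha, rfl⟩
  have hfinj : ∀ a b : G, c * a⁻¹ = c * b⁻¹ → a = b := fun a b h =>
    inv_injective (mul_left_cancel h)
  obtain ⟨a₁, a₂, a₃, h12, h13, h23, hA⟩ := Finset.card_eq_three.mp h3
  have hmem : ∀ a : G, a ∈ A ↔ a = a₁ ∨ a = a₂ ∨ a = a₃ := by
    intro a
    rw [hA]
    simp [Finset.mem_insert]
  -- the main argument, given a fixed point of a ↦ c * a⁻¹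
  have main : ∀ astar w₁ w₂ : G, A = {astar, w₁, w₂} → astar ≠ w₁ → astar ≠ w₂ → w₁ ≠ w₂ →
      c * astar⁻¹ = astar → False := by
    intro astar w₁ w₂ hA' d1 d2 d3 hfix
    have hmem' : ∀ a : G, a ∈ A ↔ a = astar ∨ a = w₁ ∨ a = w₂ := by
      intro a
      rw [hA']
      simp [Finset.mem_insert]
    have hcs : c = astar * astar := by
      calc c = c * astar⁻¹ * astar := by rw [inv_mul_cancel_right]
        _ = astar * astar := by rw [hfix]
    have hw1 : c * w₁⁻¹ ∈ A := hf w₁ ((hmem' w₁).mpr (Or.inr (Or.inl rfl)))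
    rw [hmem'] at hw1
    have hne1 : c * w₁⁻¹ ≠ astar := by
      intro h
      exact d1 (hfinj w₁ astar (h.trans hfix.symm)).symm
    rcases hw1 with h | h | h
    · exact hne1 h
    · -- w₁ fixed, so w₂ is fixed too
      have hw2 : c * w₂⁻¹ ∈ A := hf w₂ ((hmem' w₂).mpr (Or.inr (Or.inr rfl)))
      rw [hmem'] at hw2
      have hne2 : c * w₂⁻¹ ≠ astar := by
        intro hh
        exact d2 (hfinj w₂ astar (hh.trans hfix.symm)).symm
      have hne2' : c * w₂⁻¹ ≠ w₁ := by
        intro hh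
        exact d3 (hfinj w₂ w₁ (hh.trans h.symm)).symm
      rcases hw2 with hh | hh | hh
      · exact hne2 hh
      · exact hne2' hh
      · -- all three fixed : Klein case
        have hw1s : c = w₁ * w₁ := by
          calc c = c * w₁⁻¹ * w₁ := by rw [inv_mul_cancel_right]
            _ = w₁ * w₁ := by rw [h]
        have hw2s : c = w₂ * w₂ := by
          calc c = c * w₂⁻¹ * w₂ := by rw [inv_mul_cancel_right]
            _ = w₂ * w₂ := by rw [hh]
        set u := astar⁻¹ * w₁ with hu_def
        set v := astar⁻¹ * w₂ with hv_def
        have hu : u * u = 1 := by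
          rw [hu_def]
          calc (astar⁻¹ * w₁) * (astar⁻¹ * w₁) = (astar⁻¹ * astar⁻¹) * (w₁ * w₁) :=
              mul_mul_mul_comm _ _ _ _
            _ = (astar * astar)⁻¹ * (w₁ * w₁) := by rw [mul_inv]
            _ = c⁻¹ * c := by rw [← hcs, ← hw1s]
            _ = 1 := inv_mul_cancel c
        have hv : v * v = 1 := by
          rw [hv_def]
          calc (astar⁻¹ * w₂) * (astar⁻¹ * w₂) = (astar⁻¹ * astar⁻¹) * (w₂ * w₂) :=
              mul_mul_mul_comm _ _ _ _
            _ = (astar * astar)⁻¹ * (w₂ * w₂) := by rw [mul_inv]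
            _ = c⁻¹ * c := by rw [← hcs, ← hw2s]
            _ = 1 := inv_mul_cancel c
        refine nf_endgame_klein hp hcardG hc hAB h3 u v astar hu hv ?_
        intro a ha
        rw [hmem'] at ha
        rcases ha with rfl | rfl | rfl
        · rw [inv_mul_cancel]
          exact Subgroup.one_mem _
        · exact Subgroup.subset_closure (by simp [hu_def])
        · exact Subgroup.subset_closure (by simp [hv_def])
    · -- c * w₁⁻¹ = w₂ : cyclic case
      set u := astar⁻¹ * w₁ with hu_def
      have hv : astar⁻¹ * w₂ = u⁻¹ := by
        rw [← h, hcs, hu_def]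
        rw [mul_inv_rev, inv_inv]
        rw [mul_assoc astar astar w₁⁻¹]
        rw [inv_mul_cancel_left]
        exact mul_comm _ _
      refine nf_endgame_cyclic hc hAB h3 hnc u astar ?_
      intro a ha
      rw [hmem'] at ha
      rcases ha with rfl | rfl | rfl
      · rw [inv_mul_cancel]
        exact Subgroup.one_mem _
      · exact Subgroup.mem_zpowers u
      · rw [hv]
        exact Subgroup.inv_mem _ (Subgroup.mem_zpowers u)
  -- find a fixed point
  have h1 : c * a₁⁻¹ ∈ A := hf a₁ ((hmem a₁).mpr (Or.inl rfl))
  rw [hmem] at h1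
  rcases h1 with e1 | e1 | e1
  · exact main a₁ a₂ a₃ hA h12 h13 h23 e1
  · -- c * a₁⁻¹ = a₂, so a₃ is fixed
    have e2 : c * a₂⁻¹ = a₁ := by
      have hcs : c = a₂ * a₁ := by
        calc c = c * a₁⁻¹ * a₁ := by rw [inv_mul_cancel_right]
          _ = a₂ * a₁ := by rw [e1]
      rw [hcs, mul_comm a₂ a₁, mul_inv_cancel_right]
    have h3' : c * a₃⁻¹ ∈ A := hf a₃ ((hmem a₃).mpr (Or.inr (Or.inr rfl)))
    rw [hmem] at h3'
    rcases h3' with f1 | f1 | f1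
    · exact absurd (hfinj a₃ a₂ (f1.trans e2.symm)) h23.symm
    · exact absurd (hfinj a₃ a₁ (f1.trans e1.symm)) h13.symm
    · refine main a₃ a₁ a₂ ?_ h13.symm h23.symm h12 f1
      rw [hA]
      ext x
      simp only [Finset.mem_insert, Finset.mem_singleton]
      tauto
  · -- c * a₁⁻¹ = a₃, so a₂ is fixed
    have e2 : c * a₃⁻¹ = a₁ := by
      have hcs : c = a₃ * a₁ := by
        calc c = c * a₁⁻¹ * a₁ := by rw [inv_mul_cancel_right]
          _ = a₃ * a₁ := by rw [e1]
      rw [hcs, mul_comm a₃ a₁, mul_inv_cancel_right]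
    have h2' : c * a₂⁻¹ ∈ A := hf a₂ ((hmem a₂).mpr (Or.inr (Or.inl rfl)))
    rw [hmem] at h2'
    rcases h2' with f1 | f1 | f1
    · exact absurd (hfinj a₂ a₃ (f1.trans e2.symm)) h23
    · refine main a₂ a₁ a₃ ?_ h12.symm h23 h13 f1
      rw [hA]
      ext x
      simp only [Finset.mem_insert, Finset.mem_singleton]
      tauto
    · exact absurd (hfinj a₂ a₁ (f1.trans e1.symm)) h12.symm

end NFFinal

theorem no_near_factorization_of_card_three_p_add_one {G : Type*} [CommGroup G] [Fintype G]
    [DecidableEq G] (p : ℕ) (hp : p.Prime) (hcard : Fintype.card G = 3 * p + 1)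
    (hnc : ¬ IsCyclic G) :
    ¬ ∃ A B : Finset G, IsNontrivialNearFactorization A B := by
  rintro ⟨A, B, hc, hAB, hA1, hB1⟩
  have h3p : A.card * B.card = 3 * p := by
    rw [hc, hcard]
    omega
  have hdvd : 3 ∣ A.card * B.card := ⟨p, h3p⟩
  have hp3 : Nat.Prime 3 := by norm_num
  have hcard3 : A.card = 3 ∨ B.card = 3 := by
    rcases (Nat.Prime.dvd_mul hp3).mp hdvd with h | h
    · left
      obtain ⟨k, hk⟩ := h
      have hkB : k * B.card = p := by
        have h33 : 3 * (k * B.card) = 3 * p := by rw [← mul_assoc, ← hk, h3p]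
        omega
      have hkdvd : k ∣ p := ⟨B.card, hkB.symm⟩
      rcases hp.eq_one_or_self_of_dvd k hkdvd with h1 | h1
      · rw [hk, h1, mul_one]
      · exfalso
        rw [h1] at hkB
        have hppos : 0 < p := hp.pos
        have hB1' : B.card = 1 :=
          Nat.eq_of_mul_eq_mul_left hppos (by rw [hkB, mul_one] : p * B.card = p * 1)
        omega
    · right
      obtain ⟨k, hk⟩ := h
      have hkA : k * A.card = p := by
        have h3p' : B.card * A.card = 3 * p := by rw [mul_comm]; exact h3p
        have h33 : 3 * (k * A.card) = 3 * p := by rw [← mul_assoc, ← hk, h3p']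
        omega
      have hkdvd : k ∣ p := ⟨A.card, hkA.symm⟩
      rcases hp.eq_one_or_self_of_dvd k hkdvd with h1 | h1
      · rw [hk, h1, mul_one]
      · exfalso
        rw [h1] at hkA
        have hppos : 0 < p := hp.pos
        have hA1' : A.card = 1 :=
          Nat.eq_of_mul_eq_mul_left hppos (by rw [hkA, mul_one] : p * A.card = p * 1)
        omega
  rcases hcard3 with h3 | h3
  · exact nf_no_card_three hp hcard hnc hc hAB h3
  · have hc' : B.card * A.card = Fintype.card G - 1 := by rw [mul_comm]; exact hc
    have hAB' : B * A = Finset.univ \ {1} := by rw [mul_comm]; exact hAB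
    exact nf_no_card_three hp hcard hnc hc' hAB' h3
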